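/- (Mscm, ⊗, I) is a symmetric monoidal category: the category Mscm with tensor product given on objects by componentwise disjoint union of port types, on morphisms by block-diagonal stacking of the component matrices (reindexed along the canonical sum-type bijections), with monoidal unit I = (∅, ∅) the object whose input and output port types are empty, admits a symmetric monoidal category structure, with associator, left and right unitors, and braiding given by the morphisms induced by the canonical bijections of sum types (associativity (A ⊕ B) ⊕ C ≃ A ⊕ (B ⊕ C), unit laws ∅ ⊕ A ≃ A ≃ A ⊕ ∅, commutativity A ⊕ B ≃ B ⊕ A), satisfying the pentagon, triangle, hexagon, and braiding-involutivity axioms. -/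

import Mathlib

/-!
Mscm morphisms over the language semiring `K = Language σ`.

A morphism from `X = (Xin, Xout)` to `Y = (Yin, Yout)` is a pair of matrices
`(Min : Matrix Xin (Yin ⊕ Xout) K, Mout : Matrix Yout Xout K)`.
The identity on `X` is `(Matrix.fromCols 1 0, 1)` (the block row `[1 | 0]`).
-/

/-- The auxiliary matrix `N'_out` of the composition formula: the block matrix of type
`Matrix ((Zin ⊕ Yout) ⊕ Xout) (Zin ⊕ Xout) K` whose `(Zin, Zin)` block is the identity,
whose `(Yout, Xout)` block is `Nout`, whose `(Xout, Xout)` block is the identity, and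
whose remaining blocks are zero. -/
def mscmNout' {σ : Type} {Zin Yout Xout : Type} [DecidableEq Zin] [DecidableEq Xout]
    (Nout : Matrix Yout Xout (Language σ)) :
    Matrix ((Zin ⊕ Yout) ⊕ Xout) (Zin ⊕ Xout) (Language σ) :=
  Matrix.of fun r c =>
    match r, c with
    | Sum.inl (Sum.inl z), Sum.inl z' => (1 : Matrix Zin Zin (Language σ)) z z'
    | Sum.inl (Sum.inr y), Sum.inr x => Nout y x
    | Sum.inr x, Sum.inr x' => (1 : Matrix Xout Xout (Language σ)) x x'
    | _, _ => 0

/-- The input-matrix component of the composite `m ∘ n` of Mscm-morphisms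
`n = (Nin, Nout) : X → Y` and `m = (Min, Mout) : Y → Z`, namely
`O_in = N_in * M'_in * N'_out` where `M'_in = fromBlocks Min 0 0 1`. -/
def mscmCompIn {σ : Type} {Xin Xout Yin Yout Zin : Type}
    [Fintype Yin] [Fintype Yout] [Fintype Xout] [Fintype Zin]
    [DecidableEq Zin] [DecidableEq Xout]
    (Nin : Matrix Xin (Yin ⊕ Xout) (Language σ))
    (Nout : Matrix Yout Xout (Language σ))
    (Min : Matrix Yin (Zin ⊕ Yout) (Language σ)) :
    Matrix Xin (Zin ⊕ Xout) (Language σ) :=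
  Nin * (Matrix.fromBlocks Min 0 0 1 : Matrix (Yin ⊕ Xout) ((Zin ⊕ Yout) ⊕ Xout) (Language σ)) *
    mscmNout' (Zin := Zin) Nout


open CategoryTheory

/-- The in-component of the tensor product of two Mscm-morphisms: the block-diagonal
matrix with blocks `M1in` and `M2in`, reindexed along the canonical bijection
`(Y1in ⊕ X1out) ⊕ (Y2in ⊕ X2out) ≃ (Y1in ⊕ Y2in) ⊕ (X1out ⊕ X2out)`. -/
def mscmTensorIn {σ : Type} {X1in X1out Y1in X2in X2out Y2in : Type}
    (M1in : Matrix X1in (Y1in ⊕ X1out) (Language σ))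
    (M2in : Matrix X2in (Y2in ⊕ X2out) (Language σ)) :
    Matrix (X1in ⊕ X2in) ((Y1in ⊕ Y2in) ⊕ (X1out ⊕ X2out)) (Language σ) :=
  (Matrix.fromBlocks M1in 0 0 M2in).submatrix id
    (Equiv.sumSumSumComm Y1in X1out Y2in X2out).symm

/-- An object of `Mscm`: a pair of finite types, the input and output ports of a box. -/
structure MscmObj (σ : Type) : Type 1 where
  inT : Type
  outT : Type
  [finIn : Fintype inT]
  [finOut : Fintype outT]
  [decIn : DecidableEq inT]
  [decOut : DecidableEq outT]

attribute [instance] MscmObj.finIn MscmObj.finOut MscmObj.decIn MscmObj.decOut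

/-- The category structure of `Mscm`: a morphism `X ⟶ Y` is a pair of matrices
`(Min : Matrix X.inT (Y.inT ⊕ X.outT) K, Mout : Matrix Y.outT X.outT K)`, the identity
is `(fromColumns 1 0, 1)`, and composition is the matrix composition formula. -/
instance mscmCategoryStruct (σ : Type) : CategoryStruct (MscmObj σ) where
  Hom X Y := Matrix X.inT (Y.inT ⊕ X.outT) (Language σ) × Matrix Y.outT X.outT (Language σ)
  id X := (Matrix.fromCols 1 0, 1)
  comp {X Y Z} n m := (mscmCompIn n.1 n.2 m.1, m.2 * n.2)

/-- The tensor product of objects: componentwise disjoint union (sum) of port types. -/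
def mscmTensorObj {σ : Type} (A B : MscmObj σ) : MscmObj σ :=
  MscmObj.mk (A.inT ⊕ B.inT) (A.outT ⊕ B.outT)

/-- The monoidal unit `I = (∅, ∅)`: the box with no input and no output ports. -/
def mscmUnit (σ : Type) : MscmObj σ := MscmObj.mk PEmpty PEmpty

/-- The tensor product of morphisms: block-diagonal stacking of the component
matrices, reindexed along the canonical sum-type bijections. -/
def mscmTensorHom {σ : Type} {X1 Y1 X2 Y2 : MscmObj σ} (f : X1 ⟶ Y1) (g : X2 ⟶ Y2) :
    mscmTensorObj X1 X2 ⟶ mscmTensorObj Y1 Y2 :=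
  (mscmTensorIn f.1 g.1, Matrix.fromBlocks f.2 0 0 g.2)

/-- The Mscm-morphism induced by bijections of input and output port types
(entrywise: a permutation-style 0/1 matrix on input ports, paired with zeros into the
domain's output ports, and a permutation-style 0/1 matrix on output ports). -/
def mscmIso {σ : Type} (X Y : MscmObj σ) (eIn : X.inT ≃ Y.inT) (eOut : X.outT ≃ Y.outT) :
    X ⟶ Y :=
  (Matrix.of fun x c =>
      Sum.elim (fun y => if eIn x = y then (1 : Language σ) else 0)
        (fun _ => (0 : Language σ)) c,
   Matrix.of fun y x => if eOut.symm y = x then (1 : Language σ) else 0)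

/-- The associator, induced by the canonical bijections `(A ⊕ B) ⊕ C ≃ A ⊕ (B ⊕ C)`. -/
def mscmAssoc {σ : Type} (A B C : MscmObj σ) :
    mscmTensorObj (mscmTensorObj A B) C ⟶ mscmTensorObj A (mscmTensorObj B C) :=
  mscmIso _ _ (Equiv.sumAssoc A.inT B.inT C.inT) (Equiv.sumAssoc A.outT B.outT C.outT)

/-- The left unitor, induced by the canonical bijections `∅ ⊕ A ≃ A`. -/
def mscmLeftUnitor {σ : Type} (A : MscmObj σ) : mscmTensorObj (mscmUnit σ) A ⟶ A :=
  mscmIso _ _ (Equiv.emptySum PEmpty A.inT) (Equiv.emptySum PEmpty A.outT)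

/-- The right unitor, induced by the canonical bijections `A ⊕ ∅ ≃ A`. -/
def mscmRightUnitor {σ : Type} (A : MscmObj σ) : mscmTensorObj A (mscmUnit σ) ⟶ A :=
  mscmIso _ _ (Equiv.sumEmpty A.inT PEmpty) (Equiv.sumEmpty A.outT PEmpty)

/-- The braiding, induced by the canonical bijections `A ⊕ B ≃ B ⊕ A`. -/
def mscmBraid {σ : Type} (A B : MscmObj σ) : mscmTensorObj A B ⟶ mscmTensorObj B A :=
  mscmIso _ _ (Equiv.sumComm A.inT B.inT) (Equiv.sumComm A.outT B.outT)

/-! ### Auxiliary lemmas -/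

section Aux

open Matrix

lemma mscmNout'_eq {σ : Type} {Zin Yout Xout : Type} [DecidableEq Zin] [DecidableEq Xout]
    (N : Matrix Yout Xout (Language σ)) :
    mscmNout' (Zin := Zin) N =
      Matrix.fromBlocks (Matrix.fromRows 1 0) (Matrix.fromRows 0 N) 0 1 := by
  ext r c : 1
  rcases r with (z | y) | x <;> rcases c with z' | x' <;>
    simp [mscmNout', Matrix.fromBlocks]

/-- Canonical column-block form of an Mscm morphism. -/
def mscmMk3 {σ : Type} {X Y : MscmObj σ}
    (A : Matrix X.inT Y.inT (Language σ)) (B : Matrix X.inT X.outT (Language σ))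
    (C : Matrix Y.outT X.outT (Language σ)) : X ⟶ Y :=
  (Matrix.fromCols A B, C)

/-- Composition formula in canonical column-block form. -/
lemma mscm_comp_mk3 {σ : Type} {X Y Z : MscmObj σ}
    (A : Matrix X.inT Y.inT (Language σ)) (B : Matrix X.inT X.outT (Language σ))
    (C : Matrix Y.outT X.outT (Language σ))
    (A' : Matrix Y.inT Z.inT (Language σ)) (B' : Matrix Y.inT Y.outT (Language σ))
    (C' : Matrix Z.outT Y.outT (Language σ)) :
    mscmMk3 A B C ≫ mscmMk3 A' B' C'
      = mscmMk3 (A * A') (A * B' * C + B) (C' * C) := by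
  refine Prod.ext ?_ rfl
  show mscmCompIn (Matrix.fromCols A B) C (Matrix.fromCols A' B') = _
  rw [mscmCompIn, mscmNout'_eq]
  simp only [Matrix.fromCols_mul_fromBlocks, Matrix.mul_zero, Matrix.zero_mul,
    Matrix.mul_one, add_zero, zero_add, Matrix.mul_assoc,
    Matrix.fromCols_mul_fromRows, Matrix.one_mul]
  rfl

lemma mscm_hom_eta {σ : Type} {X Y : MscmObj σ} (f : X ⟶ Y) :
    f = mscmMk3 f.1.toCols₁ f.1.toCols₂ f.2 :=
  Prod.ext (Matrix.fromCols_toCols f.1).symm rfl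

lemma mscm_id_eq {σ : Type} (X : MscmObj σ) :
    (𝟙 X : X ⟶ X) = mscmMk3 1 0 1 := rfl

/-- The permutation-style 0/1 matrix of a bijection. -/
def permM {σ : Type} {α β : Type} [DecidableEq β] (e : α ≃ β) : Matrix α β (Language σ) :=
  Matrix.of fun x y => if e x = y then (1 : Language σ) else 0

lemma permM_refl {σ : Type} {α : Type} [DecidableEq α] :
    (permM (σ := σ) (Equiv.refl α)) = 1 := by
  ext x y : 1
  simp [permM, Matrix.one_apply]
  rfl

lemma permM_mul {σ : Type} {α β γ : Type} [Fintype β] [DecidableEq β] [DecidableEq γ]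
    (e : α ≃ β) (f : β ≃ γ) :
    (permM (σ := σ) e) * permM (σ := σ) f = permM (e.trans f) := by
  apply Matrix.ext; intro x z
  rw [Matrix.mul_apply, Finset.sum_eq_single (e x)]
  · simp [permM]
    rfl
  · intro b _ hb
    simp [permM, if_neg (Ne.symm hb)]
  · intro h
    exact absurd (Finset.mem_univ _) h

lemma permM_congr {σ : Type} {α β : Type} [DecidableEq β] {e e' : α ≃ β}
    (h : ∀ x, e x = e' x) : (permM (σ := σ) e) = permM e' := by
  ext x y; simp [permM, h]

lemma mscmIso_eq {σ : Type} (X Y : MscmObj σ) (eIn : X.inT ≃ Y.inT) (eOut : X.outT ≃ Y.outT) :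
    mscmIso X Y eIn eOut = mscmMk3 (permM eIn) 0 (permM eOut.symm) := by
  refine Prod.ext ?_ rfl
  ext x c : 1
  rcases c with y | x' <;> simp [mscmIso, mscmMk3, permM, Matrix.fromCols]

lemma mscmIso_refl {σ : Type} (X : MscmObj σ) :
    mscmIso X X (Equiv.refl _) (Equiv.refl _) = 𝟙 X := by
  rw [mscmIso_eq, mscm_id_eq]
  have h : ((Equiv.refl X.outT).symm) = Equiv.refl X.outT := rfl
  rw [h, permM_refl, permM_refl]

lemma mscmIso_comp {σ : Type} {X Y Z : MscmObj σ}
    (eIn : X.inT ≃ Y.inT) (eOut : X.outT ≃ Y.outT)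
    (fIn : Y.inT ≃ Z.inT) (fOut : Y.outT ≃ Z.outT) :
    mscmIso X Y eIn eOut ≫ mscmIso Y Z fIn fOut
      = mscmIso X Z (eIn.trans fIn) (eOut.trans fOut) := by
  rw [mscmIso_eq, mscmIso_eq, mscm_comp_mk3, mscmIso_eq]
  simp only [Matrix.mul_zero, Matrix.zero_mul, add_zero, permM_mul]
  exact Prod.ext rfl (permM_congr fun x => rfl)

lemma mscmIso_comp3 {σ : Type} {X Y Z W : MscmObj σ}
    (eIn : X.inT ≃ Y.inT) (eOut : X.outT ≃ Y.outT)
    (fIn : Y.inT ≃ Z.inT) (fOut : Y.outT ≃ Z.outT)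
    (gIn : Z.inT ≃ W.inT) (gOut : Z.outT ≃ W.outT) :
    mscmIso X Y eIn eOut ≫ mscmIso Y Z fIn fOut ≫ mscmIso Z W gIn gOut
      = mscmIso X W (eIn.trans (fIn.trans gIn)) (eOut.trans (fOut.trans gOut)) := by
  rw [mscmIso_comp, mscmIso_comp]

lemma mscmIso_congr {σ : Type} {X Y : MscmObj σ} {e e' : X.inT ≃ Y.inT}
    {f f' : X.outT ≃ Y.outT} (h1 : ∀ x, e x = e' x) (h2 : ∀ x, f x = f' x) :
    mscmIso X Y e f = mscmIso X Y e' f' := by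
  cases Equiv.ext h1; cases Equiv.ext h2; rfl

lemma mscmIso_tensor {σ : Type} {X1 Y1 X2 Y2 : MscmObj σ}
    (e1 : X1.inT ≃ Y1.inT) (f1 : X1.outT ≃ Y1.outT)
    (e2 : X2.inT ≃ Y2.inT) (f2 : X2.outT ≃ Y2.outT) :
    mscmTensorHom (mscmIso X1 Y1 e1 f1) (mscmIso X2 Y2 e2 f2)
      = mscmIso (mscmTensorObj X1 X2) (mscmTensorObj Y1 Y2)
          (e1.sumCongr e2) (f1.sumCongr f2) := by
  refine Prod.ext ?_ ?_
  · show mscmTensorIn (mscmIso X1 Y1 e1 f1).1 (mscmIso X2 Y2 e2 f2).1 = _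
    ext i c : 1
    rcases i with x1 | x2 <;> rcases c with (y1 | y2) | (o1 | o2) <;>
      simp [mscmTensorIn, mscmIso, mscmTensorObj, Matrix.fromBlocks] <;>
      erw [Matrix.of_apply, Equiv.sumCongr_apply] <;> simp
  · show Matrix.fromBlocks (mscmIso X1 Y1 e1 f1).2 0 0 (mscmIso X2 Y2 e2 f2).2 = _
    ext y x : 1
    rcases y with y1 | y2 <;> rcases x with x1 | x2 <;>
      simp [mscmIso, mscmTensorObj, Matrix.fromBlocks] <;>
      erw [Matrix.of_apply, Equiv.sumCongr_apply] <;> simp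

end Aux

/-- **(Mscm, ⊗, I) is a symmetric monoidal category**: `Mscm` is a category (identity
and associativity laws hold), and the tensor product (disjoint union of port types and
block-diagonal stacking of matrices) with unit `I = (∅, ∅)` and with associator,
unitors and braiding induced by the canonical sum-type bijections satisfies the
pentagon, triangle, hexagon, and braiding-involutivity axioms. -/
theorem mscm_symmetric_monoidal (σ : Type) :
    -- Mscm is a category
    (∀ (X Y : MscmObj σ) (f : X ⟶ Y), 𝟙 X ≫ f = f) ∧
    (∀ (X Y : MscmObj σ) (f : X ⟶ Y), f ≫ 𝟙 Y = f) ∧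
    (∀ (W X Y Z : MscmObj σ) (f : W ⟶ X) (g : X ⟶ Y) (h : Y ⟶ Z),
        (f ≫ g) ≫ h = f ≫ (g ≫ h)) ∧
    -- pentagon axiom
    (∀ A B C D : MscmObj σ,
        mscmTensorHom (mscmAssoc A B C) (𝟙 D) ≫ mscmAssoc A (mscmTensorObj B C) D ≫
            mscmTensorHom (𝟙 A) (mscmAssoc B C D)
          = mscmAssoc (mscmTensorObj A B) C D ≫ mscmAssoc A B (mscmTensorObj C D)) ∧
    -- triangle axiom
    (∀ A B : MscmObj σ,
        mscmAssoc A (mscmUnit σ) B ≫ mscmTensorHom (𝟙 A) (mscmLeftUnitor B)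
          = mscmTensorHom (mscmRightUnitor A) (𝟙 B)) ∧
    -- hexagon axiom
    (∀ A B C : MscmObj σ,
        mscmAssoc A B C ≫ mscmBraid A (mscmTensorObj B C) ≫ mscmAssoc B C A
          = mscmTensorHom (mscmBraid A B) (𝟙 C) ≫ mscmAssoc B A C ≫
              mscmTensorHom (𝟙 B) (mscmBraid A C)) ∧
    -- the braiding is involutive
    (∀ A B : MscmObj σ, mscmBraid A B ≫ mscmBraid B A = 𝟙 (mscmTensorObj A B)) := by
  refine ⟨?_, ?_, ?_, ?_, ?_, ?_, ?_⟩
  · -- left identity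
    intro X Y f
    conv_lhs => rw [mscm_hom_eta f, mscm_id_eq, mscm_comp_mk3]
    simp only [Matrix.one_mul, Matrix.mul_one, add_zero]
    exact (mscm_hom_eta f).symm
  · -- right identity
    intro X Y f
    conv_lhs => rw [mscm_hom_eta f, mscm_id_eq, mscm_comp_mk3]
    simp only [Matrix.mul_one, Matrix.mul_zero, Matrix.zero_mul, zero_add, Matrix.one_mul]
    exact (mscm_hom_eta f).symm
  · -- associativity
    intro W X Y Z f g h
    rw [mscm_hom_eta f, mscm_hom_eta g, mscm_hom_eta h, mscm_comp_mk3, mscm_comp_mk3,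
      mscm_comp_mk3, mscm_comp_mk3]
    simp [Matrix.mul_assoc, Matrix.add_mul, Matrix.mul_add, add_assoc]
  · -- pentagon
    intro A B C D
    rw [show (𝟙 D : D ⟶ D) = mscmIso D D (Equiv.refl _) (Equiv.refl _) from
        (mscmIso_refl D).symm,
      show (𝟙 A : A ⟶ A) = mscmIso A A (Equiv.refl _) (Equiv.refl _) from
        (mscmIso_refl A).symm]
    simp only [mscmAssoc]
    erw [mscmIso_tensor, mscmIso_tensor, mscmIso_comp3, mscmIso_comp]
    exact mscmIso_congr (by rintro (((a | b) | c) | d) <;> rfl)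
      (by rintro (((a | b) | c) | d) <;> rfl)
  · -- triangle
    intro A B
    rw [show (𝟙 A : A ⟶ A) = mscmIso A A (Equiv.refl _) (Equiv.refl _) from
        (mscmIso_refl A).symm]
    simp only [mscmAssoc, mscmLeftUnitor, mscmRightUnitor]
    rw [show (𝟙 B : B ⟶ B) = mscmIso B B (Equiv.refl _) (Equiv.refl _) from
        (mscmIso_refl B).symm]
    erw [mscmIso_tensor, mscmIso_tensor, mscmIso_comp]
    refine mscmIso_congr ?_ ?_ <;>
      · rintro ((a | x) | b)
        · rfl
        · exact x.elim
        · rfl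
  · -- hexagon
    intro A B C
    rw [show (𝟙 C : C ⟶ C) = mscmIso C C (Equiv.refl _) (Equiv.refl _) from
        (mscmIso_refl C).symm,
      show (𝟙 B : B ⟶ B) = mscmIso B B (Equiv.refl _) (Equiv.refl _) from
        (mscmIso_refl B).symm]
    simp only [mscmAssoc, mscmBraid]
    erw [mscmIso_tensor, mscmIso_tensor, mscmIso_comp3,
      mscmIso_comp3]
    exact mscmIso_congr (by rintro ((a | b) | c) <;> rfl)
      (by rintro ((a | b) | c) <;> rfl)
  · -- braiding involutive
    intro A B
    simp only [mscmBraid]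
    erw [mscmIso_comp, ← mscmIso_refl]
    exact mscmIso_congr (by rintro (a | b) <;> rfl) (by rintro (a | b) <;> rfl)
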